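/- For any real p, the limit as n → ∞ of ln(n) · (1/2 − n (ln n)^p / ((2n+1) (ln(2n+1))^p)) equals (p ln 2)/2. -/

import Mathlib

open Filter Topology

private noncomputable def Lf (n : ℕ) : ℝ := Real.log n
private noncomputable def wf (n : ℕ) : ℝ := Real.log (2 + 1 / n)
private noncomputable def vf (n : ℕ) : ℝ := wf n / Lf n
private noncomputable def uf (n : ℕ) : ℝ := Real.log (1 + vf n)

private lemma tendsto_Lf : Tendsto Lf atTop atTop :=
  Real.tendsto_log_atTop.comp tendsto_natCast_atTop_atTop

private lemma tendsto_wf : Tendsto wf atTop (𝓝 (Real.log 2)) := by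
  have h : Tendsto (fun n : ℕ => (2 : ℝ) + 1 / n) atTop (𝓝 2) := by
    have h0 : Tendsto (fun n : ℕ => (1 : ℝ) / n) atTop (𝓝 0) :=
      tendsto_one_div_atTop_nhds_zero_nat
    simpa using (tendsto_const_nhds (x := (2 : ℝ)) (f := atTop)).add h0
  exact ((Real.continuousAt_log (by norm_num)).tendsto.comp h)

private lemma wf_pos (n : ℕ) (hn : 1 ≤ n) : 0 < wf n := by
  apply Real.log_pos
  have : (0:ℝ) ≤ 1 / n := by positivity
  linarith

private lemma Lf_pos (n : ℕ) (hn : 2 ≤ n) : 0 < Lf n := by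
  apply Real.log_pos
  exact_mod_cast hn

private lemma vf_pos (n : ℕ) (hn : 2 ≤ n) : 0 < vf n :=
  div_pos (wf_pos n (by omega)) (Lf_pos n hn)

private lemma uf_pos (n : ℕ) (hn : 2 ≤ n) : 0 < uf n := by
  apply Real.log_pos
  have := vf_pos n hn
  linarith

private lemma tendsto_vf : Tendsto vf atTop (𝓝 0) :=
  tendsto_wf.div_atTop tendsto_Lf

private lemma tendsto_vf' : Tendsto vf atTop (𝓝[≠] (0:ℝ)) := by
  apply tendsto_nhdsWithin_of_tendsto_nhds_of_eventually_within _ tendsto_vf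
  filter_upwards [eventually_ge_atTop 2] with n hn
  exact ne_of_gt (vf_pos n hn)

private lemma tendsto_uf : Tendsto uf atTop (𝓝 0) := by
  have h : Tendsto (fun n => 1 + vf n) atTop (𝓝 1) := by
    simpa using (tendsto_const_nhds (x := (1:ℝ)) (f := atTop)).add tendsto_vf
  have h2 := (Real.continuousAt_log (by norm_num)).tendsto.comp h; simp [Function.comp_def] at h2; exact h2

private lemma tendsto_uf' : Tendsto uf atTop (𝓝[≠] (0:ℝ)) := by
  apply tendsto_nhdsWithin_of_tendsto_nhds_of_eventually_within _ tendsto_uf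
  filter_upwards [eventually_ge_atTop 2] with n hn
  exact ne_of_gt (uf_pos n hn)

private lemma slope_log : Tendsto (fun x : ℝ => Real.log (1 + x) / x) (𝓝[≠] 0) (𝓝 1) := by
  have h : HasDerivAt (fun x : ℝ => Real.log (1 + x)) 1 0 := by
    have h1 : HasDerivAt (fun x : ℝ => 1 + x) 1 0 := by
      simpa using (hasDerivAt_id (0:ℝ)).const_add 1
    have := (Real.hasDerivAt_log (by norm_num : (1:ℝ) + 0 ≠ 0)).comp 0 h1
    simpa [Function.comp_def] using this
  have := hasDerivAt_iff_tendsto_slope.mp h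
  refine this.congr fun x => ?_
  simp [slope_def_field, div_eq_mul_inv]

private lemma slope_exp (p : ℝ) :
    Tendsto (fun x : ℝ => (1 - Real.exp (-p * x)) / x) (𝓝[≠] 0) (𝓝 p) := by
  have h : HasDerivAt (fun x : ℝ => 1 - Real.exp (-p * x)) p 0 := by
    have h1 : HasDerivAt (fun x : ℝ => -p * x) (-p) 0 := by
      simpa using (hasDerivAt_id (0:ℝ)).const_mul (-p)
    have h2 := h1.exp
    have h3 := h2.const_sub 1
    simpa using h3
  have := hasDerivAt_iff_tendsto_slope.mp h
  refine this.congr fun x => ?_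
  simp [slope_def_field, div_eq_mul_inv]

private lemma tendsto_ratio1 : Tendsto (fun n => uf n / vf n) atTop (𝓝 1) :=
  slope_log.comp tendsto_vf'

private lemma tendsto_ratio2 (p : ℝ) :
    Tendsto (fun n => (1 - Real.exp (-p * uf n)) / uf n) atTop (𝓝 p) :=
  (slope_exp p).comp tendsto_uf'

private lemma tendsto_Lv : Tendsto (fun n => Lf n * vf n) atTop (𝓝 (Real.log 2)) := by
  apply tendsto_wf.congr'
  filter_upwards [eventually_ge_atTop 2] with n hn
  have hL := (Lf_pos n hn).ne'
  field_simp [vf]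
  simp only [vf]; field_simp

private lemma tendsto_s (p : ℝ) : Tendsto (fun n => Real.exp (-p * uf n)) atTop (𝓝 1) := by
  have h : Tendsto (fun n => -p * uf n) atTop (𝓝 0) := by
    simpa using tendsto_uf.const_mul (-p)
  simpa [Function.comp_def] using (Real.continuous_exp.tendsto 0).comp h

private lemma tendsto_small : Tendsto (fun n : ℕ => Lf n / (2 * (2 * (n:ℝ) + 1))) atTop (𝓝 0) := by
  have hls : Tendsto (fun n : ℕ => Real.log n / n) atTop (𝓝 0) :=
    Real.isLittleO_log_id_atTop.tendsto_div_nhds_zero.comp tendsto_natCast_atTop_atTop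
  apply squeeze_zero' (g := fun n : ℕ => Real.log n / n)
  · filter_upwards [eventually_ge_atTop 2] with n hn
    exact le_of_lt (div_pos (Lf_pos n hn) (by positivity))
  · filter_upwards [eventually_ge_atTop 2] with n hn
    have hL := (Lf_pos n hn).le
    have hn' : (1:ℝ) ≤ (n:ℝ) := by exact_mod_cast Nat.one_le_iff_ne_zero.mpr (by omega)
    apply div_le_div_of_nonneg_left hL (by linarith) (by linarith)
  · exact hls

theorem log_ratio_limit_odd (p : ℝ) :
    Filter.Tendsto
      (fun n : ℕ => Real.log n *
        (1 / 2 - ((n : ℝ) * (Real.log n) ^ p) /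
          ((2 * (n : ℝ) + 1) * (Real.log (2 * (n : ℝ) + 1)) ^ p)))
      Filter.atTop (nhds (p * Real.log 2 / 2)) := by
  have hG : Tendsto (fun n : ℕ =>
      1 / 2 * ((Lf n * vf n) * (uf n / vf n)) * ((1 - Real.exp (-p * uf n)) / uf n)
        + Real.exp (-p * uf n) * (Lf n / (2 * (2 * (n:ℝ) + 1)))) atTop
      (𝓝 (1 / 2 * (Real.log 2 * 1) * p + 1 * 0)) := by
    exact ((((tendsto_Lv.mul tendsto_ratio1).const_mul (1/2)).mul (tendsto_ratio2 p)).add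
      ((tendsto_s p).mul tendsto_small))
  have heq : p * Real.log 2 / 2 = 1 / 2 * (Real.log 2 * 1) * p + 1 * 0 := by ring
  rw [heq]
  apply hG.congr'
  filter_upwards [eventually_ge_atTop 2] with n hn
  -- now prove the pointwise identity for n ≥ 2
  have hL : 0 < Lf n := Lf_pos n hn
  have hn0 : (0:ℝ) < (n:ℝ) := by exact_mod_cast (by omega : 0 < n)
  have hM0 : (1:ℝ) < 2 * (n:ℝ) + 1 := by linarith
  have hM : 0 < Real.log (2 * (n:ℝ) + 1) := Real.log_pos hM0
  set M : ℝ := Real.log (2 * (n:ℝ) + 1) with hMdef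
  have hMw : M = Lf n + wf n := by
    rw [hMdef, Lf, wf]
    rw [← Real.log_mul (ne_of_gt hn0) (by positivity)]
    congr 1
    field_simp
  have hv : vf n = wf n / Lf n := rfl
  have hMv : M = Lf n * (1 + vf n) := by
    rw [hMw, hv]; field_simp
  have hvpos := vf_pos n hn
  have hupos := uf_pos n hn
  -- s = (L/M)^p = exp (-p * u)
  have hs : Real.log (n:ℝ) ^ p / M ^ p = Real.exp (-p * uf n) := by
    have h1 : Real.log (n:ℝ) ^ p / M ^ p = (Lf n / M) ^ p := by
      show Lf n ^ p / M ^ p = (Lf n / M) ^ p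
      rw [Real.div_rpow hL.le hM.le]
    rw [h1, Real.rpow_def_of_pos (div_pos hL hM)]
    congr 1
    rw [Real.log_div hL.ne' hM.ne', hMv, Real.log_mul hL.ne' (by positivity)]
    have : uf n = Real.log (1 + vf n) := rfl
    rw [this]; ring
  -- rewrite the main term
  have hratio : (n : ℝ) * Real.log (n:ℝ) ^ p / ((2 * (n:ℝ) + 1) * M ^ p)
      = ((n:ℝ) / (2 * (n:ℝ) + 1)) * Real.exp (-p * uf n) := by
    rw [← hs]; field_simp
  have hLn : Real.log (n:ℝ) = Lf n := rfl
  rw [hLn] at hratio ⊢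
  rw [hratio]
  -- now pure algebra with u, v ≠ 0
  have h1 : Lf n * vf n * (uf n / vf n) = Lf n * uf n := by
    field_simp
  rw [h1]
  have h2 : 1 / 2 * (Lf n * uf n) * ((1 - Real.exp (-p * uf n)) / uf n)
      = 1 / 2 * Lf n * (1 - Real.exp (-p * uf n)) := by
    field_simp
  rw [h2]
  have h3 : (2 * (n:ℝ) + 1) ≠ 0 := by linarith
  field_simp
  ring
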